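/- Let L be a finite lattice in which the bottom element 0 is meet-reducible and the top element 1 is join-reducible, and let S = Skel L be its skeleton sublattice. Then L = ⋃ { [u,v]_L : (u,v) an edge of S }, and for every edge (u,v) of S, the interval [u,v]_L is a chain. -/

import Mathlib

/-- The set of join-reducible elements: elements with at least two lower covers. -/
def Jr (L : Type) [Lattice L] : Set L := {x | ∃ y z, y ⋖ x ∧ z ⋖ x ∧ y ≠ z}

/-- The set of meet-reducible elements: elements with at least two upper covers. -/
def Mr (L : Type) [Lattice L] : Set L := {x | ∃ y z, x ⋖ y ∧ x ⋖ z ∧ y ≠ z}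

/-- The skeleton of `L`. -/
def Skel (L : Type) [Lattice L] : Set L :=
  Jr L ∪ Mr L ∪ {y | ∃ x ∈ Jr L, y ⋖ x} ∪ {y | ∃ x ∈ Mr L, x ⋖ y}

/-- `(u, v)` is an edge of the skeleton: `u, v ∈ Skel L`, `u < v`, and no element of
`Skel L` lies strictly between them (covering inside the sublattice `Skel L`). -/
def SkelEdge (L : Type) [Lattice L] (u v : L) : Prop :=
  u ∈ Skel L ∧ v ∈ Skel L ∧ u < v ∧ ∀ w ∈ Skel L, ¬ (u < w ∧ w < v)

lemma Jr_subset_Skel (L : Type) [Lattice L] : Jr L ⊆ Skel L :=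
  fun _ h => Or.inl (Or.inl (Or.inl h))

lemma Mr_subset_Skel (L : Type) [Lattice L] : Mr L ⊆ Skel L :=
  fun _ h => Or.inl (Or.inl (Or.inr h))

lemma cover_of_Mr_mem_Skel {L : Type} [Lattice L] {x y : L} (h : x ∈ Mr L) (hc : x ⋖ y) :
    y ∈ Skel L := Or.inr ⟨x, h, hc⟩

/-- If `a ⊓ b < a` and `a ⊓ b < b`, then `a ⊓ b` has two distinct upper covers,
one below `a` and one below `b`. -/
lemma exists_two_covers {L : Type} [Lattice L] [Finite L] {a b : L}
    (h1 : a ⊓ b < a) (h2 : a ⊓ b < b) :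
    ∃ c d, a ⊓ b ⋖ c ∧ c ≤ a ∧ a ⊓ b ⋖ d ∧ d ≤ b ∧ c ≠ d := by
  obtain ⟨c, hc, hca⟩ := exists_covBy_le_of_lt h1
  obtain ⟨d, hd, hdb⟩ := exists_covBy_le_of_lt h2
  refine ⟨c, d, hc, hca, hd, hdb, ?_⟩
  rintro rfl
  exact hc.lt.not_ge (le_inf hca hdb)

/-- Dual: if `a < a ⊔ b` and `b < a ⊔ b`, then `a ⊔ b` has two distinct lower covers. -/
lemma exists_two_covers' {L : Type} [Lattice L] [Finite L] {a b : L}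
    (h1 : a < a ⊔ b) (h2 : b < a ⊔ b) :
    ∃ c d, c ⋖ a ⊔ b ∧ a ≤ c ∧ d ⋖ a ⊔ b ∧ b ≤ d ∧ c ≠ d := by
  obtain ⟨c, hac, hc⟩ := exists_le_covBy_of_lt h1
  obtain ⟨d, hbd, hd⟩ := exists_le_covBy_of_lt h2
  refine ⟨c, d, hc, hac, hd, hbd, ?_⟩
  rintro rfl
  exact hc.lt.not_ge (sup_le hac hbd)

/-- If `L` is a finite lattice whose bottom is meet-reducible and whose top is
join-reducible, then `L` is the union of the intervals `[u,v]_L` over the edges `(u,v)`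
of `Skel L`, and each such interval is a chain. -/
theorem skel_edges_cover_and_chains (L : Type) [Lattice L] [Finite L] [BoundedOrder L]
    (h0 : (⊥ : L) ∈ Mr L) (h1 : (⊤ : L) ∈ Jr L) :
    (∀ x : L, ∃ u v : L, SkelEdge L u v ∧ x ∈ Set.Icc u v) ∧
      ∀ u v : L, SkelEdge L u v → IsChain (· ≤ ·) (Set.Icc u v) := by
  have hbotS : (⊥ : L) ∈ Skel L := Mr_subset_Skel L h0
  have htopS : (⊤ : L) ∈ Skel L := Jr_subset_Skel L h1
  have hbt : (⊥ : L) < ⊤ := by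
    obtain ⟨y, z, hy, _, _⟩ := h0
    exact lt_of_lt_of_le hy.lt le_top
  constructor
  · intro x
    by_cases hx : x = ⊤
    · -- use a maximal skeleton element below ⊤
      subst hx
      obtain ⟨u, ⟨huS, hult⟩, humax⟩ :=
        Set.Finite.exists_maximalFor id {s : L | s ∈ Skel L ∧ s < ⊤} (Set.toFinite _)
          ⟨⊥, hbotS, hbt⟩
      refine ⟨u, ⊤, ⟨huS, htopS, hult, ?_⟩, le_of_lt hult, le_rfl⟩
      rintro w hwS ⟨huw, hwt⟩
      exact huw.not_ge (humax (j := w) ⟨hwS, hwt⟩ huw.le)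
    · -- x < ⊤; take u maximal in Skel below x, v minimal in Skel strictly above x
      have hxt : x < ⊤ := lt_top_iff_ne_top.2 hx
      obtain ⟨u, ⟨huS, hux⟩, humax⟩ :=
        Set.Finite.exists_maximalFor id {s : L | s ∈ Skel L ∧ s ≤ x} (Set.toFinite _)
          ⟨⊥, hbotS, bot_le⟩
      obtain ⟨v, ⟨hvS, hxv⟩, hvmin⟩ :=
        Set.Finite.exists_minimalFor id {s : L | s ∈ Skel L ∧ x < s} (Set.toFinite _)
          ⟨⊤, htopS, hxt⟩
      refine ⟨u, v, ⟨huS, hvS, lt_of_le_of_lt hux hxv, ?_⟩, hux, hxv.le⟩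
      rintro w hwS ⟨huw, hwv⟩
      by_cases hwx : w ≤ x
      · exact huw.not_ge (humax (j := w) ⟨hwS, hwx⟩ huw.le)
      by_cases hxw : x ≤ w
      · have : x < w := lt_of_le_of_ne hxw (fun h => hwx h.ge)
        exact hwv.not_ge (hvmin (j := w) ⟨hwS, this⟩ hwv.le)
      · -- w and x are incomparable
        have hm1 : w ⊓ x < w := inf_lt_left.2 hwx
        have hm2 : w ⊓ x < x := inf_lt_right.2 hxw
        obtain ⟨c, d, hc, hcw, hd, hdx, hcd⟩ := exists_two_covers hm1 hm2
        have hmMr : w ⊓ x ∈ Mr L := ⟨c, d, hc, hd, hcd⟩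
        have hmS : w ⊓ x ∈ Skel L := Mr_subset_Skel L hmMr
        have hum : u ≤ w ⊓ x := le_inf huw.le hux
        have huem : u = w ⊓ x := le_antisymm hum (humax ⟨hmS, hm2.le⟩ hum)
        have hdS : d ∈ Skel L := cover_of_Mr_mem_Skel hmMr hd
        have : u < d := huem ▸ hd.lt
        exact this.not_ge (humax ⟨hdS, hdx⟩ this.le)
  · rintro u v ⟨huS, hvS, huv, hedge⟩ a ha b hb hab
    by_contra hnc
    push_neg at hnc
    have hba : ¬ b ≤ a := fun h => hnc.2 h
    have hab' : ¬ a ≤ b := fun h => hnc.1 h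
    -- the meet
    have hm1 : a ⊓ b < a := inf_lt_left.2 hab'
    have hm2 : a ⊓ b < b := inf_lt_right.2 hba
    obtain ⟨c, d, hc, hca, hd, hdb, hcd⟩ := exists_two_covers hm1 hm2
    have hmMr : a ⊓ b ∈ Mr L := ⟨c, d, hc, hd, hcd⟩
    have hmS : a ⊓ b ∈ Skel L := Mr_subset_Skel L hmMr
    -- the join
    have hj1 : a < a ⊔ b := left_lt_sup.2 hba
    have hj2 : b < a ⊔ b := right_lt_sup.2 hab'
    obtain ⟨c', d', hc', hac', hd', hbd', hcd'⟩ := exists_two_covers' hj1 hj2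
    have hjJr : a ⊔ b ∈ Jr L := ⟨c', d', hc', hd', hcd'⟩
    have hjS : a ⊔ b ∈ Skel L := Jr_subset_Skel L hjJr
    -- locate meet and join at the endpoints
    have hum : u ≤ a ⊓ b := le_inf ha.1 hb.1
    have hmv : a ⊓ b < v := lt_of_lt_of_le hm1 ha.2
    have huem : u = a ⊓ b := by
      by_contra h
      exact hedge _ hmS ⟨lt_of_le_of_ne hum h, hmv⟩
    have hjv : a ⊔ b ≤ v := sup_le ha.2 hb.2
    have huj : u < a ⊔ b := lt_of_le_of_lt (le_inf ha.1 hb.1) (lt_of_lt_of_le hm1 hj1.le)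
    have hjev : a ⊔ b = v := by
      by_contra h
      exact hedge _ hjS ⟨huj, lt_of_le_of_ne hjv h⟩
    -- now c is a skeleton element strictly between u and v
    have hcS : c ∈ Skel L := cover_of_Mr_mem_Skel hmMr hc
    have h1 : u < c := huem ▸ hc.lt
    have h2 : c < v := hjev ▸ lt_of_le_of_lt hca hj1
    exact hedge _ hcS ⟨h1, h2⟩
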